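/- If A = I − E is an n×n real matrix with |e_{ij}| ≤ ε for all 1 ≤ i,j ≤ n and e_{ii} = 0 for 1 ≤ i ≤ n, where ε ≥ 0, then det(A) ≤ (1 + (n−1)ε²)^{n/2}. No upper restriction on ε is required; for ε = 1 this reduces to Hadamard's bound n^{n/2}. -/

import Mathlib

open Matrix

/-- If `A = I - E` with `|e i j| ≤ ε` for all `i, j`, zero diagonal `e i i = 0`, and
`ε ≥ 0`, then `det A ≤ (1 + (n-1) ε²) ^ (n/2)` (real power). No upper restriction
on `ε`; for `ε = 1` this is Hadamard's bound `n ^ (n/2)`. -/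
theorem det_upper_bound_zero_diag
    (n : ℕ) (hn : 1 ≤ n) (ε : ℝ) (hε : 0 ≤ ε)
    (E A : Matrix (Fin n) (Fin n) ℝ)
    (hA : A = 1 - E)
    (hE : ∀ i j, |E i j| ≤ ε)
    (hdiag : ∀ i, E i i = 0) :
    A.det ≤ (1 + ((n : ℝ) - 1) * ε ^ 2) ^ ((n : ℝ) / 2) := by
  classical
  set c : ℝ := 1 + ((n : ℝ) - 1) * ε ^ 2 with hcdef
  have hn1 : (1:ℝ) ≤ (n:ℝ) := by exact_mod_cast hn
  have hnne : (n:ℝ) ≠ 0 := by positivity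
  have hc1 : (1:ℝ) ≤ c := by nlinarith [sq_nonneg ε]
  have hc0 : (0:ℝ) ≤ c := by linarith
  have hM : (Aᴴ * A).PosSemidef := Matrix.posSemidef_conjTranspose_mul_self A
  have hH := hM.1
  -- trace bound
  have hdiagbound : ∀ i, (Aᴴ * A) i i ≤ c := by
    intro i
    have : (Aᴴ * A) i i = ∑ j, (A j i)^2 := by
      simp [Matrix.mul_apply, Matrix.conjTranspose_apply, sq]
    rw [this]
    have hsplit : ∑ j, (A j i)^2 = (A i i)^2 + ∑ j ∈ Finset.univ.erase i, (A j i)^2 :=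
      (Finset.add_sum_erase _ _ (Finset.mem_univ i)).symm
    have hAii : A i i = 1 := by simp [hA, hdiag i]
    have hoff : ∀ j ∈ Finset.univ.erase i, (A j i)^2 ≤ ε^2 := by
      intro j hj
      have hji : j ≠ i := Finset.ne_of_mem_erase hj
      have : A j i = - E j i := by simp [hA, Matrix.one_apply_ne hji]
      rw [this, neg_sq, ← sq_abs]
      exact pow_le_pow_left₀ (abs_nonneg _) (hE j i) 2
    have hsum : ∑ j ∈ Finset.univ.erase i, (A j i)^2 ≤ ((n:ℝ) - 1) * ε^2 := by
      have := Finset.sum_le_card_nsmul _ _ (ε^2) hoff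
      have hcard : (Finset.univ.erase i).card = n - 1 := by
        simp [Finset.card_erase_of_mem]
      rw [hcard] at this
      have : ((n-1 : ℕ) : ℝ) * ε^2 = ((n:ℝ) - 1) * ε^2 := by
        rw [Nat.cast_sub hn]; norm_num
      calc ∑ j ∈ Finset.univ.erase i, (A j i)^2 ≤ (n-1 : ℕ) • ε^2 := by
            simpa using Finset.sum_le_card_nsmul _ _ (ε^2) hoff
        _ = ((n:ℝ) - 1) * ε^2 := by rw [nsmul_eq_mul, Nat.cast_sub hn]; norm_num
    rw [hsplit, hAii]
    simpa [hcdef] using add_le_add_left hsum 1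
  have htr : (Aᴴ * A).trace ≤ n * c := by
    have : (Aᴴ * A).trace = ∑ i, (Aᴴ * A) i i := rfl
    rw [this]
    calc ∑ i, (Aᴴ * A) i i ≤ ∑ _i : Fin n, c := Finset.sum_le_sum (fun i _ => hdiagbound i)
      _ = n * c := by simp [mul_comm]
  -- eigenvalues
  have hlam0 : ∀ i, 0 ≤ hH.eigenvalues i := hM.eigenvalues_nonneg
  have hsum : ∑ i, hH.eigenvalues i = (Aᴴ * A).trace := by
    have hspec := hH.spectral_theorem
    set U : Matrix (Fin n) (Fin n) ℝ := (Matrix.IsHermitian.eigenvectorUnitary hH : Matrix (Fin n) (Fin n) ℝ)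
    have hUU : star U * U = 1 := by
      have := (Matrix.IsHermitian.eigenvectorUnitary hH).2
      exact (Matrix.mem_unitaryGroup_iff').mp this
    calc ∑ i, hH.eigenvalues i
        = (Matrix.diagonal (RCLike.ofReal ∘ hH.eigenvalues) : Matrix (Fin n) (Fin n) ℝ).trace := by
          simp [Matrix.trace_diagonal]
      _ = (U * Matrix.diagonal (RCLike.ofReal ∘ hH.eigenvalues) * star U).trace := by
          rw [Matrix.trace_mul_cycle, hUU, one_mul]
      _ = (Aᴴ * A).trace := by exact (congrArg Matrix.trace hspec).symm
  have hdet : (Aᴴ * A).det = ∏ i, hH.eigenvalues i := by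
    simpa using hH.det_eq_prod_eigenvalues
  -- AM-GM
  have hgm := Real.geom_mean_le_arith_mean_weighted Finset.univ (fun _ => 1/(n:ℝ))
      hH.eigenvalues (fun i _ => by positivity)
      (by simp [Finset.sum_const, hnne])
      (fun i _ => hlam0 i)
  set P : ℝ := ∏ i, hH.eigenvalues i ^ ((1:ℝ)/(n:ℝ)) with hPdef
  have hP0 : 0 ≤ P := Finset.prod_nonneg fun i _ => Real.rpow_nonneg (hlam0 i) _
  have hPle : P ≤ c := by
    have h2 : ∑ i, (1/(n:ℝ)) * hH.eigenvalues i = (Aᴴ * A).trace / n := by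
      rw [← Finset.mul_sum, hsum]; ring
    have : (Aᴴ * A).trace / n ≤ c := by
      rw [div_le_iff₀ (by positivity)]
      linarith [htr]
    calc P ≤ ∑ i, (1/(n:ℝ)) * hH.eigenvalues i := hgm
      _ = (Aᴴ * A).trace / n := h2
      _ ≤ c := this
  have hPn : P ^ n = ∏ i, hH.eigenvalues i := by
    rw [hPdef, ← Finset.prod_pow]
    refine Finset.prod_congr rfl fun i _ => ?_
    rw [← Real.rpow_natCast (hH.eigenvalues i ^ ((1:ℝ)/(n:ℝ))) n, ← Real.rpow_mul (hlam0 i)]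
    rw [one_div, inv_mul_cancel₀ hnne, Real.rpow_one]
  have hprod : ∏ i, hH.eigenvalues i ≤ c ^ n := by
    rw [← hPn]
    exact pow_le_pow_left₀ hP0 hPle n
  have hdetsq : A.det ^ 2 ≤ c ^ n := by
    have h1 : (Aᴴ * A).det = A.det ^ 2 := by
      rw [Matrix.det_mul, Matrix.det_conjTranspose, sq]
      simp
    rw [← h1, hdet]; exact hprod
  calc A.det ≤ |A.det| := le_abs_self _
    _ = Real.sqrt (A.det ^ 2) := (Real.sqrt_sq_eq_abs _).symm
    _ ≤ Real.sqrt (c ^ n) := Real.sqrt_le_sqrt hdetsq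
    _ = c ^ ((n:ℝ) / 2) := by
        rw [Real.sqrt_eq_rpow, ← Real.rpow_natCast c n, ← Real.rpow_mul hc0]
        ring_nf
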